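/- arXiv:1812.08850 — 12 statements merged into one kernel-verified Lean document; each statement's English description precedes it below -/
import Mathlib

section
/- Let X be a finite set of balls with a coloring c. If a ball x ∈ X is a non-minority ball of X but not a plurality ball of X, then exactly two colors occur on the balls of X, the size |X| is even, and each of the two color classes in X has exactly |X|/2 elements. -/
/-- The color class of color `γ` in the finite set `Q` of balls, under coloring `c`. -/
def colorClass {Ball Color : Type*} [DecidableEq Ball] [DecidableEq Color]
    (c : Ball → Color) (Q : Finset Ball) (γ : Color) : Finset Ball :=
  Q.filter (fun b => c b = γ)

/-- `x` is a non-minority ball of `Q`: its color class has at least `|Q|/2` elements. -/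
def IsNonMinority {Ball Color : Type*} [DecidableEq Ball] [DecidableEq Color]
    (c : Ball → Color) (Q : Finset Ball) (x : Ball) : Prop :=
  x ∈ Q ∧ Q.card ≤ 2 * (colorClass c Q (c x)).card

/-- `x` is a plurality ball of `Q`: its color class is strictly larger than
every other color class. -/
def IsPlurality {Ball Color : Type*} [DecidableEq Ball] [DecidableEq Color]
    (c : Ball → Color) (Q : Finset Ball) (x : Ball) : Prop :=
  x ∈ Q ∧ ∀ γ : Color, γ ≠ c x → (colorClass c Q γ).card < (colorClass c Q (c x)).card

/-- if a ball `x ∈ X` is non-minority but not plurality in `X`, then exactly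
two colors occur on the balls of `X`, `|X|` is even, and each of the two color classes
has exactly `|X|/2` elements. -/
theorem nonMinority_not_plurality {Ball Color : Type*} [DecidableEq Ball] [DecidableEq Color]
    (c : Ball → Color) (X : Finset Ball) (x : Ball)
    (hnm : IsNonMinority c X x) (hnp : ¬ IsPlurality c X x) :
    (X.image c).card = 2 ∧ Even X.card ∧
      ∀ γ ∈ X.image c, 2 * (colorClass c X γ).card = X.card := by
  obtain ⟨hx, hle⟩ := hnm
  simp only [IsPlurality, not_and, not_forall, not_lt] at hnp
  obtain ⟨γ, hγne, hγge⟩ := hnp hx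
  have hdisj : Disjoint (colorClass c X γ) (colorClass c X (c x)) := by
    simp only [Finset.disjoint_left, colorClass, Finset.mem_filter]
    rintro a ⟨_, h1⟩ ⟨_, h2⟩
    exact hγne (h1 ▸ h2 ▸ rfl)
  have hsub : colorClass c X γ ∪ colorClass c X (c x) ⊆ X := by
    intro a ha
    rcases Finset.mem_union.1 ha with h | h <;>
      exact (Finset.mem_filter.1 h).1
  have hcardU : (colorClass c X γ ∪ colorClass c X (c x)).card =
      (colorClass c X γ).card + (colorClass c X (c x)).card :=
    Finset.card_union_of_disjoint hdisj
  have hsum : (colorClass c X γ).card + (colorClass c X (c x)).card ≤ X.card := by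
    rw [← hcardU]; exact Finset.card_le_card hsub
  have heq : (colorClass c X γ).card = (colorClass c X (c x)).card := by omega
  have hXcard : X.card = 2 * (colorClass c X (c x)).card := by omega
  have hUeq : colorClass c X γ ∪ colorClass c X (c x) = X := by
    apply Finset.eq_of_subset_of_card_le hsub
    omega
  have hxc : x ∈ colorClass c X (c x) := Finset.mem_filter.2 ⟨hx, rfl⟩
  have hγmem : γ ∈ X.image c := by
    have hpos : 0 < (colorClass c X γ).card := by
      have : 0 < (colorClass c X (c x)).card := Finset.card_pos.2 ⟨x, hxc⟩
      omega
    obtain ⟨a, ha⟩ := Finset.card_pos.1 hpos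
    obtain ⟨haX, hac⟩ := Finset.mem_filter.1 ha
    exact Finset.mem_image.2 ⟨a, haX, hac⟩
  have himg : X.image c = {γ, c x} := by
    apply Finset.Subset.antisymm
    · intro δ hδ
      obtain ⟨a, haX, hac⟩ := Finset.mem_image.1 hδ
      have : a ∈ colorClass c X γ ∪ colorClass c X (c x) := by rw [hUeq]; exact haX
      rcases Finset.mem_union.1 this with h | h <;>
        · obtain ⟨_, h2⟩ := Finset.mem_filter.1 h
          simp [← hac, h2]
    · intro δ hδ
      rcases Finset.mem_insert.1 hδ with h | h
      · exact h ▸ hγmem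
      · have := Finset.mem_singleton.1 h
        exact this ▸ Finset.mem_image.2 ⟨x, hx, rfl⟩
  refine ⟨?_, ⟨(colorClass c X (c x)).card, by omega⟩, ?_⟩
  · rw [himg, Finset.card_insert_of_notMem (by simpa using hγne),
      Finset.card_singleton]
  · intro δ hδ
    rw [himg] at hδ
    rcases Finset.mem_insert.1 hδ with h | h
    · subst h; omega
    · have := Finset.mem_singleton.1 h
      subst this; omega
end

section
/- Let c be a coloring of balls taking at most two colors, let X be a finite set of balls and let S ⊆ X be such that the two color classes of S have equal size. If x ∈ X \ S is a non-minority ball of X \ S, then x is a non-minority ball of X. -/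
/-- with a coloring taking at most two colors, if `S ⊆ X` has its two color
classes of equal size, then a non-minority ball of `X \ S` is a non-minority ball of `X`. -/
theorem nonMinority_of_balanced_removed {Ball Color : Type*}
    [DecidableEq Ball] [DecidableEq Color]
    (c : Ball → Color) (α β : Color) (hc : ∀ b : Ball, c b = α ∨ c b = β)
    (X S : Finset Ball) (hSX : S ⊆ X)
    (hbal : (colorClass c S α).card = (colorClass c S β).card)
    (x : Ball) (hx : x ∈ X \ S)
    (hnm : IsNonMinority c (X \ S) x) :
    IsNonMinority c X x := by
  obtain ⟨hx', hcard⟩ := hnm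
  have hxX : x ∈ X := (Finset.mem_sdiff.mp hx).1
  refine ⟨hxX, ?_⟩
  -- color class splits
  have hsplit : colorClass c X (c x) =
      colorClass c (X \ S) (c x) ∪ colorClass c S (c x) := by
    simp only [colorClass, ← Finset.filter_union]
    congr 1
    ext b
    simp only [Finset.mem_union, Finset.mem_sdiff]
    constructor
    · intro hb
      by_cases hbS : b ∈ S
      · exact Or.inr hbS
      · exact Or.inl ⟨hb, hbS⟩
    · rintro (⟨hb, _⟩ | hb)
      · exact hb
      · exact hSX hb
  have hdisj : Disjoint (colorClass c (X \ S) (c x)) (colorClass c S (c x)) := by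
    apply Finset.disjoint_filter_filter
    exact Finset.sdiff_disjoint
  have hccard : (colorClass c X (c x)).card =
      (colorClass c (X \ S) (c x)).card + (colorClass c S (c x)).card := by
    rw [hsplit, Finset.card_union_of_disjoint hdisj]
  -- |S| ≤ 2 * |colorClass c S (c x)|
  have hS : S.card ≤ 2 * (colorClass c S (c x)).card := by
    by_cases hab : α = β
    · have : colorClass c S (c x) = S := by
        apply Finset.filter_true_of_mem
        intro b _
        rcases hc b with h | h <;> rcases hc x with h' | h' <;> simp [h, h', hab]
      rw [this]; omega
    · have hpart : S.card = (colorClass c S α).card + (colorClass c S β).card := by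
        rw [← Finset.card_union_of_disjoint]
        · congr 1
          ext b
          simp only [colorClass, Finset.mem_union, Finset.mem_filter]
          constructor
          · intro hb
            rcases hc b with h | h
            · exact Or.inl ⟨hb, h⟩
            · exact Or.inr ⟨hb, h⟩
          · rintro (⟨hb, _⟩ | ⟨hb, _⟩) <;> exact hb
        · rw [Finset.disjoint_left]
          intro b hb hb'
          simp only [colorClass, Finset.mem_filter] at hb hb'
          exact hab (hb.2 ▸ hb'.2)
      rcases hc x with h | h <;> rw [h] <;> omega
  have hXcard : X.card = (X \ S).card + S.card := by
    have := Finset.card_le_card hSX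
    rw [Finset.card_sdiff_of_subset hSX]
    omega
  omega
end

section
/- Let q ≥ 2 and let (Q₁,…,Q_m; b₁,…,b_m; y₁,…,y_{m−1}) be a winner-out run of query size q such that each b_i is a plurality ball of Q_i, and set S = Q_m \ {b_m}. Then for every i with 1 ≤ i ≤ m, the color class of c(b_i) in S has maximum size among all color classes of S. -/
/-- A winner-out run of length `m` and query size `q` (indices `0, …, m-1`):
each query `Q i` has size `q`, the answer ball `b i` belongs to `Q i`, the next query
is obtained by replacing `b i` with the fresh ball `y i`, and `y i` avoids all
previous queries `Q 0, …, Q i`. -/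
def WinnerOutRun {Ball : Type*} [DecidableEq Ball]
    (q m : ℕ) (Q : ℕ → Finset Ball) (b y : ℕ → Ball) : Prop :=
  (∀ i < m, (Q i).card = q) ∧
  (∀ i < m, b i ∈ Q i) ∧
  (∀ i, i + 1 < m → Q (i + 1) = insert (y i) (Q i \ {b i})) ∧
  (∀ i, i + 1 < m → ∀ j ≤ i, y i ∉ Q j)

lemma colorClass_card_insert {Ball Color : Type*} [DecidableEq Ball] [DecidableEq Color]
    (c : Ball → Color) {Q : Finset Ball} {y : Ball} (hy : y ∉ Q) (γ : Color) :
    (colorClass c (insert y Q) γ).card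
      = (colorClass c Q γ).card + (if c y = γ then 1 else 0) := by
  unfold colorClass
  rw [Finset.filter_insert]
  split_ifs with h
  · rw [Finset.card_insert_of_notMem (fun hmem => hy (Finset.mem_filter.1 hmem).1)]
  · simp

lemma colorClass_card_erase {Ball Color : Type*} [DecidableEq Ball] [DecidableEq Color]
    (c : Ball → Color) {Q : Finset Ball} {x : Ball} (hx : x ∈ Q) (γ : Color) :
    (colorClass c (Q \ {x}) γ).card + (if c x = γ then 1 else 0)
      = (colorClass c Q γ).card := by
  unfold colorClass
  rw [Finset.sdiff_singleton_eq_erase, Finset.filter_erase]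
  split_ifs with h
  · rw [Finset.card_erase_of_mem (Finset.mem_filter.2 ⟨hx, h⟩)]
    have : 0 < (Finset.filter (fun b => c b = γ) Q).card :=
      Finset.card_pos.2 ⟨x, Finset.mem_filter.2 ⟨hx, h⟩⟩
    omega
  · have hnot : x ∉ Finset.filter (fun b => c b = γ) Q :=
      fun hmem => h (Finset.mem_filter.1 hmem).2
    rw [Finset.erase_eq_of_notMem hnot, Nat.add_zero]


lemma key_step {Color : Type*} [DecidableEq Color] (nj nj1 : Color → ℕ) (A B B' Y : Color)
    (hstep : ∀ δ, nj1 δ + (if B = δ then 1 else 0) = nj δ + (if Y = δ then 1 else 0))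
    (IH1 : ∀ δ, δ ≠ B → nj δ ≤ nj A)
    (IH2 : nj B ≤ nj A + 1)
    (pj : ∀ δ, δ ≠ B → nj δ < nj B)
    (pj1 : ∀ δ, δ ≠ B' → nj1 δ < nj1 B') :
    (∀ δ, δ ≠ B' → nj1 δ ≤ nj1 A) ∧ nj1 B' ≤ nj1 A + 1 := by
  -- ite-free consequences of hstep
  have hgeB : ∀ δ, B ≠ δ → nj δ ≤ nj1 δ := by
    intro δ h; have := hstep δ; rw [if_neg h] at this; split_ifs at this <;> omega
  have hleY : ∀ δ, Y ≠ δ → nj1 δ ≤ nj δ := by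
    intro δ h; have := hstep δ; rw [if_neg h] at this; split_ifs at this <;> omega
  have heq : ∀ δ, B ≠ δ → Y = δ → nj1 δ = nj δ + 1 := by
    intro δ h h'; have := hstep δ; rw [if_neg h, if_pos h'] at this; omega
  have heqB : ∀ δ, B = δ → Y ≠ δ → nj1 δ + 1 = nj δ := by
    intro δ h h'; have := hstep δ; rw [if_pos h, if_neg h'] at this; omega
  have heqBY : ∀ δ, B = δ → Y = δ → nj1 δ = nj δ := by
    intro δ h h'; have := hstep δ; rw [if_pos h, if_pos h'] at this; omega
  have hleB : nj1 B ≤ nj B := by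
    have := hstep B; rw [if_pos rfl] at this; split_ifs at this <;> omega
  have hgeB1 : nj B ≤ nj1 B + 1 := by
    have := hstep B; rw [if_pos rfl] at this; split_ifs at this <;> omega
  constructor
  · intro δ hδ
    by_cases hδA : δ = A
    · rw [hδA]
    by_cases hδB : δ = B
    · -- δ = B, δ ≠ A, δ ≠ B'
      rw [hδB]
      have hBB' : B ≠ B' := fun e => hδ (hδB.trans e)
      by_cases hYB : Y = B
      · -- classes unchanged; B stays strict max; contradiction with pj1
        have h1 := heqBY B rfl hYB
        have h2 : nj1 B' ≤ nj B' := hleY B' (fun e => hBB' (hYB.symm.trans e))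
        have h3 : nj B' < nj B := pj B' (Ne.symm hBB')
        have h4 := pj1 B hBB'
        omega
      · have h1 := heqB B rfl hYB
        have hAB : A ≠ B := fun e => hδA (hδB.trans e.symm)
        have h2 : nj A ≤ nj1 A := hgeB A (Ne.symm hAB)
        omega
    · -- δ ≠ A, δ ≠ B, δ ≠ B'
      by_cases hYδ : Y = δ
      · -- class of δ grew by 1
        have h1 := heq δ (fun e => hδB e.symm) hYδ
        have h4 := pj1 δ hδ
        have hYB : Y ≠ B := fun e => hδB (hYδ.symm.trans e)
        have hYA : Y ≠ A := fun e => hδA (hYδ.symm.trans e)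
        by_cases hB'B : B' = B
        · by_cases hAB : A = B
          · -- A = B = B' so nj1 B' = nj1 A
            have : nj1 B' = nj1 A := by rw [hB'B, hAB]
            omega
          · have h5 : nj1 B + 1 = nj B := heqB B rfl hYB
            have h6 : nj A ≤ nj1 A := hgeB A (fun e => hAB e.symm)
            rw [hB'B] at h4
            omega
        · have h5 : nj1 B' ≤ nj B' := hleY B' (fun e => hδ (hYδ.symm.trans e))
          have h6 : nj B' < nj B := pj B' hB'B
          by_cases hAB : A = B
          · have h7 : nj1 A + 1 = nj A := heqB A hAB.symm hYA
            rw [← hAB] at h6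
            omega
          · have h7 : nj A ≤ nj1 A := hgeB A (fun e => hAB e.symm)
            have h8 := IH1 B' hB'B
            omega
      · -- class of δ unchanged or shrank
        have h1 : nj1 δ ≤ nj δ := hleY δ hYδ
        by_cases hAB : A = B
        · have h2 : nj δ < nj B := pj δ hδB
          rw [← hAB] at h2 hgeB1
          omega
        · have h2 : nj A ≤ nj1 A := hgeB A (fun e => hAB e.symm)
          have h3 := IH1 δ hδB
          omega
  · by_cases hB'A : B' = A
    · rw [hB'A]; omega
    by_cases hB'B : B' = B
    · have hAB : A ≠ B := fun e => hB'A (hB'B.trans e.symm)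
      have h2 : nj A ≤ nj1 A := hgeB A (Ne.symm hAB)
      rw [hB'B]
      omega
    · have h2 : nj B' < nj B := pj B' hB'B
      by_cases hAB : A = B
      · rw [← hAB] at h2 hgeB1
        have h5 : nj1 B' ≤ nj B' + 1 := by
          have := hstep B'; split_ifs at this <;> omega
        omega
      · have h3 : nj A ≤ nj1 A := hgeB A (fun e => hAB e.symm)
        have h4 := IH1 B' hB'B
        have h5 : nj1 B' ≤ nj B' + 1 := by
          have := hstep B'; split_ifs at this <;> omega
        omega


/-- in a winner-out run of query size `q ≥ 2` where each `b i` is a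
plurality ball of `Q i`, with `S = Q_m \ {b_m}`, the color class of each `c (b i)` in `S`
has maximum size among all color classes of `S`. -/
theorem winnerOut_plurality_answers_largest {Ball Color : Type*}
    [DecidableEq Ball] [DecidableEq Color]
    (c : Ball → Color) (q m : ℕ) (hq : 2 ≤ q) (hm : 1 ≤ m)
    (Q : ℕ → Finset Ball) (b y : ℕ → Ball)
    (hrun : WinnerOutRun q m Q b y)
    (hplur : ∀ i < m, IsPlurality c (Q i) (b i)) :
    ∀ i < m, ∀ γ : Color,
      (colorClass c (Q (m - 1) \ {b (m - 1)}) γ).card ≤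
        (colorClass c (Q (m - 1) \ {b (m - 1)}) (c (b i))).card := by
  obtain ⟨hcard, hmem, hins, hfresh⟩ := hrun
  intro i him γ
  have key : ∀ j, i ≤ j → j < m →
      (∀ δ, δ ≠ c (b j) →
        (colorClass c (Q j) δ).card ≤ (colorClass c (Q j) (c (b i))).card) ∧
      (colorClass c (Q j) (c (b j))).card ≤ (colorClass c (Q j) (c (b i))).card + 1 := by
    intro j hij
    induction j, hij using Nat.le_induction with
    | base =>
        intro hi
        refine ⟨fun δ hδ => le_of_lt ((hplur i hi).2 δ hδ), Nat.le_succ _⟩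
    | succ j hij IH =>
        intro hj1
        have hjm : j < m := by omega
        have hQ : Q (j+1) = insert (y j) (Q j \ {b j}) := hins j hj1
        have hyQ : y j ∉ Q j := hfresh j hj1 j le_rfl
        have hbj : b j ∈ Q j := hmem j hjm
        have hy' : y j ∉ Q j \ {b j} := fun h => hyQ (Finset.mem_sdiff.1 h).1
        have hstep : ∀ δ, (colorClass c (Q (j+1)) δ).card + (if c (b j) = δ then 1 else 0)
            = (colorClass c (Q j) δ).card + (if c (y j) = δ then 1 else 0) := by
          intro δ
          rw [hQ, colorClass_card_insert c hy' δ]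
          have := colorClass_card_erase c hbj δ
          omega
        have IHj := IH hjm
        exact key_step (fun δ => (colorClass c (Q j) δ).card)
          (fun δ => (colorClass c (Q (j+1)) δ).card)
          (c (b i)) (c (b j)) (c (b (j+1))) (c (y j))
          hstep IHj.1 IHj.2 (fun δ h => (hplur j hjm).2 δ h)
          (fun δ h => (hplur (j+1) hj1).2 δ h)
  have him1 : i ≤ m - 1 := by omega
  have hm1 : m - 1 < m := by omega
  obtain ⟨h1, h2⟩ := key (m-1) him1 hm1
  have hb : b (m-1) ∈ Q (m-1) := hmem _ hm1
  have eγ := colorClass_card_erase c hb γ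
  have eA := colorClass_card_erase c hb (c (b i))
  have pl := (hplur (m-1) hm1).2
  by_cases hγC : γ = c (b (m-1))
  · rw [hγC]
    by_cases hAC : c (b i) = c (b (m-1))
    · rw [hAC]
    · have eC := colorClass_card_erase c hb (c (b (m-1)))
      rw [if_pos rfl] at eC
      rw [if_neg (fun e => hAC e.symm)] at eA
      omega
  · rw [if_neg (fun e => hγC e.symm)] at eγ
    have h1γ := h1 γ hγC
    by_cases hAC : c (b i) = c (b (m-1))
    · rw [if_pos hAC.symm] at eA
      have hlt := pl γ hγC
      rw [← hAC] at hlt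
      omega
    · rw [if_neg (fun e => hAC e.symm)] at eA
      omega
end

section
/- Let k ≥ 1, let c be a coloring of balls using at most two colors, and let (Q₁,…,Q_m; b₁,…,b_m; y₁,…,y_{m−1}) be a winner-out run of query size q = 2k+1 such that each b_i is a majority ball of Q_i, and set S = Q_m \ {b_m} (so |S| = 2k). Then either each of the two colors occurs exactly k times in S, or there is a color γ occurring at least k+1 times in S such that c(b_i) = γ for every i with 1 ≤ i ≤ m. -/
/-- `x` is a majority ball of `Q`: its color class has more than `|Q|/2` elements. -/
def IsMajority {Ball Color : Type*} [DecidableEq Ball] [DecidableEq Color]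
    (c : Ball → Color) (Q : Finset Ball) (x : Ball) : Prop :=
  x ∈ Q ∧ Q.card < 2 * (colorClass c Q (c x)).card

lemma cc_mono {Ball Color : Type*} [DecidableEq Ball] [DecidableEq Color]
    (c : Ball → Color) {S T : Finset Ball} (h : S ⊆ T) (γ : Color) :
    (colorClass c S γ).card ≤ (colorClass c T γ).card :=
  Finset.card_le_card (Finset.filter_subset_filter _ h)

lemma cc_erase {Ball Color : Type*} [DecidableEq Ball] [DecidableEq Color]
    (c : Ball → Color) {T : Finset Ball} {x : Ball} {γ : Color}
    (hx : x ∈ T) (hcx : c x = γ) :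
    (colorClass c T γ).card = (colorClass c (T \ {x}) γ).card + 1 := by
  classical
  rw [Finset.sdiff_singleton_eq_erase]
  unfold colorClass
  rw [Finset.filter_erase]
  rw [Finset.card_erase_of_mem (by simp [Finset.mem_filter, hx, hcx])]
  have : 0 < (Finset.filter (fun b => c b = γ) T).card :=
    Finset.card_pos.2 ⟨x, by simp [Finset.mem_filter, hx, hcx]⟩
  omega

lemma cc_insert_le {Ball Color : Type*} [DecidableEq Ball] [DecidableEq Color]
    (c : Ball → Color) (T : Finset Ball) (z : Ball) (γ : Color) :
    (colorClass c (insert z T) γ).card ≤ (colorClass c T γ).card + 1 := by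
  classical
  unfold colorClass
  rw [Finset.filter_insert]
  split
  · exact Finset.card_insert_le _ _
  · omega

/-- two colors, winner-out run of query size `2k+1` with all answers
majority balls, `S = Q_m \ {b_m}`.  Then either both colors occur exactly `k` times
in `S`, or some color `γ` occurs at least `k+1` times in `S` and all answer balls
have color `γ`. -/
theorem winnerOut_majority_odd_two_colors {Ball Color : Type*}
    [DecidableEq Ball] [DecidableEq Color]
    (c : Ball → Color) (k m : ℕ) (hk : 1 ≤ k) (hm : 1 ≤ m)
    (α β : Color) (hαβ : α ≠ β) (hc : ∀ x : Ball, c x = α ∨ c x = β)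
    (Q : ℕ → Finset Ball) (b y : ℕ → Ball)
    (hrun : WinnerOutRun (2 * k + 1) m Q b y)
    (hmaj : ∀ i < m, IsMajority c (Q i) (b i)) :
    ((colorClass c (Q (m - 1) \ {b (m - 1)}) α).card = k ∧
      (colorClass c (Q (m - 1) \ {b (m - 1)}) β).card = k) ∨
    (∃ γ : Color, k + 1 ≤ (colorClass c (Q (m - 1) \ {b (m - 1)}) γ).card ∧
      ∀ i < m, c (b i) = γ) := by
  classical
  obtain ⟨hcard, hmem, hstep, hfresh⟩ := hrun
  -- partition of counts
  have hpart : ∀ T : Finset Ball,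
      (colorClass c T α).card + (colorClass c T β).card = T.card := by
    intro T
    have hβ : colorClass c T β = T.filter (fun x => ¬ (c x = α)) := by
      apply Finset.filter_congr
      intro x _
      rcases hc x with h | h <;> simp [h, hαβ, Ne.symm hαβ]
    rw [hβ]
    exact Finset.card_filter_add_card_filter_not _
  -- majority gives ≥ k+1 in Q i
  have hmaj' : ∀ i < m, k + 1 ≤ (colorClass c (Q i) (c (b i))).card := by
    intro i hi
    have h1 := (hmaj i hi).2
    have h2 := hcard i hi
    omega
  -- majority color is unique
  have huniq : ∀ i < m, ∀ γ : Color,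
      k + 1 ≤ (colorClass c (Q i) γ).card → c (b i) = γ := by
    intro i hi γ hγ
    by_contra hne
    have hp := hpart (Q i)
    have hQc := hcard i hi
    have hb := hmaj' i hi
    rcases hc (b i) with h | h <;> rw [h] at hb hne
    · by_cases hgb : γ = β
      · rw [hgb] at hγ; omega
      · have hemp : colorClass c (Q i) γ = ∅ := by
          apply Finset.filter_false_of_mem
          intro x _
          rcases hc x with h' | h' <;> rw [h']
          · exact hne
          · exact fun hh => hgb hh.symm
        rw [hemp, Finset.card_empty] at hγ
        omega
    · by_cases hga : γ = α
      · rw [hga] at hγ; omega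
      · have hemp : colorClass c (Q i) γ = ∅ := by
          apply Finset.filter_false_of_mem
          intro x _
          rcases hc x with h' | h' <;> rw [h']
          · exact fun hh => hga hh.symm
          · exact hne
        rw [hemp, Finset.card_empty] at hγ
        omega
  have hm1 : m - 1 < m := by omega
  have hSb : b (m - 1) ∈ Q (m - 1) := hmem _ hm1
  have hSsub : Q (m - 1) \ {b (m - 1)} ⊆ Q (m - 1) := Finset.sdiff_subset
  have hScard : (Q (m - 1) \ {b (m - 1)}).card = 2 * k := by
    rw [Finset.sdiff_singleton_eq_erase, Finset.card_erase_of_mem hSb, hcard _ hm1]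
    omega
  by_cases hα : (colorClass c (Q (m - 1) \ {b (m - 1)}) α).card = k
  · left
    have := hpart (Q (m - 1) \ {b (m - 1)})
    constructor
    · exact hα
    · omega
  · right
    set γ : Color := c (b (m - 1)) with hγdef
    -- γ-class in S has ≥ k+1
    have hγS : k + 1 ≤ (colorClass c (Q (m - 1) \ {b (m - 1)}) γ).card := by
      have hQγ := hmaj' _ hm1
      have heq := cc_erase c hSb (rfl : c (b (m - 1)) = c (b (m - 1)))
      have hpS := hpart (Q (m - 1) \ {b (m - 1)})
      rcases hc (b (m - 1)) with h | h
      · rw [hγdef, h]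
        rw [h] at hQγ heq
        omega
      · rw [hγdef, h]
        rw [h] at hQγ heq
        omega
    refine ⟨γ, hγS, ?_⟩
    -- backward induction
    have key : ∀ j, j ≤ m - 1 →
        c (b (m - 1 - j)) = γ ∧
        k + 1 ≤ (colorClass c (Q (m - 1 - j) \ {b (m - 1 - j)}) γ).card := by
      intro j
      induction j with
      | zero => intro _; exact ⟨rfl, by simpa using hγS⟩
      | succ j ih =>
        intro hj
        obtain ⟨ihc, ihcard⟩ := ih (by omega)
        set i := m - 1 - (j + 1) with hidef
        have hi1 : i + 1 = m - 1 - j := by omega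
        have hi1m : i + 1 < m := by omega
        have him : i < m := by omega
        rw [← hi1] at ihc ihcard
        have hbQ : b (i + 1) ∈ Q (i + 1) := hmem _ hi1m
        have hQ1 : k + 2 ≤ (colorClass c (Q (i + 1)) γ).card := by
          have := cc_erase c hbQ ihc
          omega
        have hQeq := hstep i hi1m
        have hins := cc_insert_le c (Q i \ {b i}) (y i) γ
        rw [← hQeq] at hins
        have hSi : k + 1 ≤ (colorClass c (Q i \ {b i}) γ).card := by omega
        have hQi : k + 1 ≤ (colorClass c (Q i) γ).card :=
          le_trans hSi (cc_mono c Finset.sdiff_subset γ)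
        exact ⟨huniq i him γ hQi, hSi⟩
    intro i hi
    have hj : i = m - 1 - (m - 1 - i) := by omega
    rw [hj]
    exact (key (m - 1 - i) (by omega)).1
end

section
/- Let k ≥ 1 and let (Q₁,…,Q_m; b₁,…,b_m; y₁,…,y_{m−1}) be a winner-out run of query size q = 2k (with an arbitrary number of colors) such that each b_i is a majority ball of Q_i. Then all the balls b₁,…,b_m have the same color γ, and the number of balls of color γ in Q₁ ∪ ⋯ ∪ Q_m is at least m + k. -/
lemma colorClass_mem {Ball Color : Type*} [DecidableEq Ball] [DecidableEq Color]
    (c : Ball → Color) (Q : Finset Ball) (γ : Color) (x : Ball) :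
    x ∈ colorClass c Q γ ↔ x ∈ Q ∧ c x = γ := by
  simp [colorClass]

lemma colorClass_insert_card {Ball Color : Type*} [DecidableEq Ball] [DecidableEq Color]
    (c : Ball → Color) (Q : Finset Ball) (γ : Color) (a : Ball) (ha : a ∉ Q) :
    (colorClass c (insert a Q) γ).card
      = (colorClass c Q γ).card + (if c a = γ then 1 else 0) := by
  unfold colorClass
  rw [Finset.filter_insert]
  split
  · rw [Finset.card_insert_of_notMem (by simp [ha])]
  · simp

lemma colorClass_sdiff_card {Ball Color : Type*} [DecidableEq Ball] [DecidableEq Color]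
    (c : Ball → Color) (Q : Finset Ball) (γ : Color) (a : Ball)
    (ha : a ∈ Q) (hca : c a = γ) :
    (colorClass c (Q \ {a}) γ).card + 1 = (colorClass c Q γ).card := by
  have h1 : colorClass c (Q \ {a}) γ = colorClass c Q γ \ {a} := by
    unfold colorClass
    ext x
    simp only [Finset.mem_filter, Finset.mem_sdiff, Finset.mem_singleton]
    tauto
  rw [h1, Finset.sdiff_singleton_eq_erase,
    Finset.card_erase_add_one (by simp [colorClass_mem, ha, hca])]

/-- in a winner-out run of query size `2k` where each answer `b i` is a
majority ball of `Q i`, all the answer balls have the same color `γ`, and at least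
`m + k` balls of `Q 0 ∪ ⋯ ∪ Q (m-1)` have color `γ`. -/
theorem winnerOut_majority_even {Ball Color : Type*}
    [DecidableEq Ball] [DecidableEq Color]
    (c : Ball → Color) (k m : ℕ) (hk : 1 ≤ k) (hm : 1 ≤ m)
    (Q : ℕ → Finset Ball) (b y : ℕ → Ball)
    (hrun : WinnerOutRun (2 * k) m Q b y)
    (hmaj : ∀ i < m, IsMajority c (Q i) (b i)) :
    ∃ γ : Color, (∀ i < m, c (b i) = γ) ∧
      m + k ≤ (colorClass c ((Finset.range m).biUnion Q) γ).card := by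
  obtain ⟨hcard, hmem, hnext, hfresh⟩ := hrun
  set γ := c (b 0) with hγ
  have hsize : ∀ i < m, k + 1 ≤ (colorClass c (Q i) (c (b i))).card := by
    intro i hi
    have h := (hmaj i hi).2
    have := hcard i hi
    omega
  -- all answer balls have color γ
  have hsame : ∀ i < m, c (b i) = γ := by
    intro i
    induction i with
    | zero => intro _; rfl
    | succ n ih =>
      intro hn1
      have hn : n < m := by omega
      have hcn : c (b n) = γ := ih hn
      -- class of γ in Q (n+1) has card ≥ k
      have hyfresh : y n ∉ Q n := hfresh n hn1 n le_rfl
      have hyfresh' : y n ∉ Q n \ {b n} := by simp [Finset.mem_sdiff]; tauto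
      have hbcls : b n ∈ Q n := hmem n hn
      have hstep : (colorClass c (Q (n+1)) γ).card
          = ((colorClass c (Q n) γ).card - 1) + (if c (y n) = γ then 1 else 0) := by
        rw [hnext n hn1, colorClass_insert_card c _ γ _ hyfresh']
        have := colorClass_sdiff_card c (Q n) γ (b n) hbcls hcn
        omega
      have hge : k ≤ (colorClass c (Q (n+1)) γ).card := by
        have := hsize n hn
        rw [hcn] at this
        omega
      by_contra hne
      have hge' : k + 1 ≤ (colorClass c (Q (n+1)) (c (b (n+1)))).card := hsize (n+1) hn1
      have hdisj : Disjoint (colorClass c (Q (n+1)) γ) (colorClass c (Q (n+1)) (c (b (n+1)))) := by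
        rw [Finset.disjoint_left]
        intro x hx hx'
        rw [colorClass_mem] at hx hx'
        exact hne (hx'.2.symm.trans hx.2)
      have hsub : colorClass c (Q (n+1)) γ ∪ colorClass c (Q (n+1)) (c (b (n+1))) ⊆ Q (n+1) := by
        apply Finset.union_subset <;> exact Finset.filter_subset _ _
      have hle := Finset.card_le_card hsub
      rw [Finset.card_union_of_disjoint hdisj, hcard (n+1) hn1] at hle
      omega
  -- union step
  have hunion : ∀ i, i + 1 < m →
      (Finset.range (i+2)).biUnion Q = insert (y i) ((Finset.range (i+1)).biUnion Q) := by
    intro i hi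
    rw [Finset.range_add_one, Finset.biUnion_insert, hnext i hi, Finset.insert_union]
    congr 1
    rw [Finset.union_eq_right]
    exact (Finset.sdiff_subset).trans (Finset.subset_biUnion_of_mem Q (by simp))
  -- key invariant
  have hinv : ∀ i < m, (colorClass c ((Finset.range (i+1)).biUnion Q) γ).card
      = (colorClass c (Q i) γ).card + i := by
    intro i
    induction i with
    | zero => intro _; simp
    | succ n ih =>
      intro hn1
      have hn : n < m := by omega
      have hyfr : y n ∉ (Finset.range (n+1)).biUnion Q := by
        intro hmem'
        obtain ⟨j, hj, hyj⟩ := Finset.mem_biUnion.mp hmem'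
        exact hfresh n hn1 j (Nat.lt_succ_iff.mp (Finset.mem_range.mp hj)) hyj
      rw [hunion n hn1, colorClass_insert_card c _ γ _ hyfr, ih hn]
      have hbn : c (b n) = γ := hsame n hn
      have hstep : (colorClass c (Q (n+1)) γ).card
          = ((colorClass c (Q n) γ).card - 1) + (if c (y n) = γ then 1 else 0) := by
        rw [hnext n hn1,
          colorClass_insert_card c _ γ _ (by simp [Finset.mem_sdiff, hfresh n hn1 n le_rfl])]
        have := colorClass_sdiff_card c (Q n) γ (b n) (hmem n hn) hbn
        omega
      have hge : k + 1 ≤ (colorClass c (Q n) γ).card := by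
        have := hsize n hn; rw [hbn] at this; exact this
      omega
  refine ⟨γ, hsame, ?_⟩
  have hlast : m - 1 < m := by omega
  have := hinv (m-1) hlast
  have h1 : m - 1 + 1 = m := by omega
  rw [h1] at this
  have hge : k + 1 ≤ (colorClass c (Q (m-1)) γ).card := by
    have h := hsize (m-1) hlast
    rw [hsame (m-1) hlast] at h
    exact h
  omega
end

section
/- Let k ≥ 1, let Q be a set of 2k+1 balls in which every color class has size at most k, and let B be a set of k+1 balls (B may intersect Q). Then B is monochromatic if and only if every set Q' of balls with B ⊆ Q' ⊆ B ∪ Q and |Q'| = 2k+1 contains a color class of size at least k+1. -/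
lemma extend_aux {Ball Color : Type*} [DecidableEq Ball] [DecidableEq Color]
    (c : Ball → Color) (k : ℕ) :
    ∀ n (A P : Finset Ball), Disjoint A P →
      (∀ γ, (colorClass c A γ).card ≤ k) →
      n + ∑ γ ∈ P.image c,
          ((colorClass c P γ).card - (k - (colorClass c A γ).card)) ≤ P.card →
      ∃ S, S ⊆ P ∧ S.card = n ∧ ∀ γ, (colorClass c (A ∪ S) γ).card ≤ k := by
  intro n
  induction n with
  | zero =>
    intro A P _ hA _
    exact ⟨∅, Finset.empty_subset _, Finset.card_empty, by simpa using hA⟩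
  | succ n ih =>
    intro A P hdis hA hsum
    have hx : ∃ p ∈ P, (colorClass c A (c p)).card < k := by
      by_contra h
      push_neg at h
      have heq : ∀ γ ∈ P.image c,
          (colorClass c P γ).card - (k - (colorClass c A γ).card)
            = (colorClass c P γ).card := by
        intro γ hγ
        obtain ⟨p, hp, rfl⟩ := Finset.mem_image.mp hγ
        have h1 := h p hp
        have h2 := hA (c p)
        omega
      rw [Finset.sum_congr rfl heq] at hsum
      have hcard : P.card = ∑ γ ∈ P.image c, (colorClass c P γ).card :=
        Finset.card_eq_sum_card_fiberwise (fun x hx => Finset.mem_image_of_mem c hx)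
      omega
    obtain ⟨p, hp, hpk⟩ := hx
    have hpA : p ∉ A := fun hpa => (Finset.disjoint_left.mp hdis hpa) hp
    set A' := insert p A with hA'def
    set P' := P.erase p with hP'def
    have hdis' : Disjoint A' P' := by
      rw [hA'def, Finset.disjoint_left]
      intro a ha haP'
      rcases Finset.mem_insert.mp ha with rfl | ha
      · exact (Finset.notMem_erase a P) haP'
      · exact Finset.disjoint_left.mp hdis ha (Finset.mem_of_mem_erase haP')
    have hclassA' : ∀ γ, colorClass c A' γ =
        if c p = γ then insert p (colorClass c A γ) else colorClass c A γ := by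
      intro γ
      simp [colorClass, A', Finset.filter_insert]
    have hclassP' : ∀ γ, colorClass c P' γ = (colorClass c P γ).erase p := by
      intro γ
      simp [colorClass, P', Finset.filter_erase]
    have hA'k : ∀ γ, (colorClass c A' γ).card ≤ k := by
      intro γ
      rw [hclassA' γ]
      split
      · next h =>
        have hpnot : p ∉ colorClass c A γ := fun hc => hpA (Finset.mem_filter.mp hc).1
        rw [Finset.card_insert_of_notMem hpnot]
        have := hA γ
        subst h
        omega
      · exact hA γ
    have hpP : p ∈ colorClass c P (c p) := Finset.mem_filter.mpr ⟨hp, rfl⟩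
    have hfeq : ∀ γ,
        (colorClass c P' γ).card - (k - (colorClass c A' γ).card)
          = (colorClass c P γ).card - (k - (colorClass c A γ).card) := by
      intro γ
      rw [hclassP' γ, hclassA' γ]
      by_cases h : c p = γ
      · rw [if_pos h]
        subst h
        have hpnotA : p ∉ colorClass c A (c p) := fun hc => hpA (Finset.mem_filter.mp hc).1
        rw [Finset.card_erase_of_mem hpP, Finset.card_insert_of_notMem hpnotA]
        have hq : 1 ≤ (colorClass c P (c p)).card := Finset.card_pos.mpr ⟨p, hpP⟩
        omega
      · rw [if_neg h]
        have : p ∉ colorClass c P γ := by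
          intro hc
          exact h (Finset.mem_filter.mp hc).2
        rw [Finset.erase_eq_of_notMem this]
    have hsum' : n + ∑ γ ∈ P'.image c,
        ((colorClass c P' γ).card - (k - (colorClass c A' γ).card)) ≤ P'.card := by
      have himg : P'.image c ⊆ P.image c :=
        Finset.image_subset_image (Finset.erase_subset p P)
      have h1 : ∑ γ ∈ P'.image c,
          ((colorClass c P' γ).card - (k - (colorClass c A' γ).card))
          ≤ ∑ γ ∈ P.image c,
          ((colorClass c P' γ).card - (k - (colorClass c A' γ).card)) :=
        Finset.sum_le_sum_of_subset himg
      have h2 : ∑ γ ∈ P.image c,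
          ((colorClass c P' γ).card - (k - (colorClass c A' γ).card))
          = ∑ γ ∈ P.image c,
          ((colorClass c P γ).card - (k - (colorClass c A γ).card)) :=
        Finset.sum_congr rfl (fun γ _ => hfeq γ)
      have h3 : P'.card = P.card - 1 := Finset.card_erase_of_mem hp
      have h4 : 1 ≤ P.card := Finset.card_pos.mpr ⟨p, hp⟩
      omega
    obtain ⟨S', hS'P', hS'card, hS'k⟩ := ih A' P' hdis' hA'k hsum'
    refine ⟨insert p S', ?_, ?_, ?_⟩
    · intro s hs
      rcases Finset.mem_insert.mp hs with rfl | hs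
      · exact hp
      · exact Finset.mem_of_mem_erase (hS'P' hs)
    · have : p ∉ S' := fun hc => (Finset.notMem_erase p P) (hS'P' hc)
      rw [Finset.card_insert_of_notMem this, hS'card]
    · intro γ
      have : A ∪ insert p S' = A' ∪ S' := by
        simp [A', Finset.union_insert, Finset.insert_union]
      rw [this]
      exact hS'k γ

/-- if every color class of the `(2k+1)`-set `Q` has size at most `k` and
`B` has `k+1` balls, then `B` is monochromatic iff every `(2k+1)`-set `Q'` with
`B ⊆ Q' ⊆ B ∪ Q` contains a color class of size at least `k+1`. -/
theorem monochromatic_iff_always_majority {Ball Color : Type*}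
    [DecidableEq Ball] [DecidableEq Color]
    (c : Ball → Color) (k : ℕ) (hk : 1 ≤ k)
    (Q : Finset Ball) (hQcard : Q.card = 2 * k + 1)
    (hQ : ∀ γ : Color, (colorClass c Q γ).card ≤ k)
    (B : Finset Ball) (hBcard : B.card = k + 1) :
    (∀ x ∈ B, ∀ y ∈ B, c x = c y) ↔
      ∀ Q' : Finset Ball, B ⊆ Q' → Q' ⊆ B ∪ Q → Q'.card = 2 * k + 1 →
        ∃ γ : Color, k + 1 ≤ (colorClass c Q' γ).card := by
  constructor
  · intro hmono Q' hBQ' _ _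
    have hBpos : 0 < B.card := by omega
    obtain ⟨x, hx⟩ := Finset.card_pos.mp hBpos
    refine ⟨c x, ?_⟩
    have hsub : B ⊆ colorClass c Q' (c x) := fun b hb =>
      Finset.mem_filter.mpr ⟨hBQ' hb, hmono b hb x hx⟩
    calc k + 1 = B.card := hBcard.symm
      _ ≤ _ := Finset.card_le_card hsub
  · intro h
    by_contra hmono
    push_neg at hmono
    obtain ⟨x, hx, y, hy, hxy⟩ := hmono
    -- every color class of B has size at most k
    have hBclass : ∀ γ, (colorClass c B γ).card ≤ k := by
      intro γ
      rcases eq_or_ne (c x) γ with h1 | h1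
      · have hsub : colorClass c B γ ⊆ B.erase y := by
          intro b hb
          obtain ⟨hbB, hbc⟩ := Finset.mem_filter.mp hb
          refine Finset.mem_erase.mpr ⟨?_, hbB⟩
          rintro rfl
          exact hxy (h1.trans hbc.symm)
        calc (colorClass c B γ).card ≤ (B.erase y).card := Finset.card_le_card hsub
          _ = k := by rw [Finset.card_erase_of_mem hy, hBcard]; omega
      · have hsub : colorClass c B γ ⊆ B.erase x := by
          intro b hb
          obtain ⟨hbB, hbc⟩ := Finset.mem_filter.mp hb
          refine Finset.mem_erase.mpr ⟨?_, hbB⟩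
          rintro rfl
          exact h1 hbc
        calc (colorClass c B γ).card ≤ (B.erase x).card := Finset.card_le_card hsub
          _ = k := by rw [Finset.card_erase_of_mem hx, hBcard]; omega
    -- pointwise bound: deficiency is covered by B \ Q
    have hpoint : ∀ γ,
        (colorClass c (Q \ B) γ).card - (k - (colorClass c B γ).card)
          ≤ (colorClass c (B \ Q) γ).card := by
      intro γ
      have hQsplit : (colorClass c (Q \ B) γ).card + (colorClass c (Q ∩ B) γ).card
          = (colorClass c Q γ).card := by
        have hu : colorClass c (Q \ B) γ ∪ colorClass c (Q ∩ B) γ = colorClass c Q γ := by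
          simp [colorClass, ← Finset.filter_union, Finset.sdiff_union_inter]
        have hd : Disjoint (colorClass c (Q \ B) γ) (colorClass c (Q ∩ B) γ) := by
          apply Finset.disjoint_filter_filter
          exact Finset.disjoint_sdiff_inter Q B
        rw [← Finset.card_union_of_disjoint hd, hu]
      have hBsplit : (colorClass c (B \ Q) γ).card + (colorClass c (B ∩ Q) γ).card
          = (colorClass c B γ).card := by
        have hu : colorClass c (B \ Q) γ ∪ colorClass c (B ∩ Q) γ = colorClass c B γ := by
          simp [colorClass, ← Finset.filter_union, Finset.sdiff_union_inter]
        have hd : Disjoint (colorClass c (B \ Q) γ) (colorClass c (B ∩ Q) γ) := by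
          apply Finset.disjoint_filter_filter
          exact Finset.disjoint_sdiff_inter B Q
        rw [← Finset.card_union_of_disjoint hd, hu]
      have hIB : colorClass c (Q ∩ B) γ = colorClass c (B ∩ Q) γ := by
        rw [Finset.inter_comm]
      have hQk := hQ γ
      rw [hIB] at hQsplit
      omega
    -- sum of the B \ Q classes over any finset of colors is at most (B \ Q).card
    have hsumBQ : ∀ T : Finset Color,
        ∑ γ ∈ T, (colorClass c (B \ Q) γ).card ≤ (B \ Q).card := by
      intro T
      have h1 : ∑ γ ∈ T, (colorClass c (B \ Q) γ).card
          ≤ ∑ γ ∈ T ∪ (B \ Q).image c, (colorClass c (B \ Q) γ).card :=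
        Finset.sum_le_sum_of_subset (Finset.subset_union_left)
      have h2 : ∑ γ ∈ T ∪ (B \ Q).image c, (colorClass c (B \ Q) γ).card
          = ∑ γ ∈ (B \ Q).image c, (colorClass c (B \ Q) γ).card := by
        refine (Finset.sum_subset Finset.subset_union_right ?_).symm
        intro γ _ hγ
        rw [Finset.card_eq_zero]
        rw [Finset.eq_empty_iff_forall_notMem]
        intro b hb
        obtain ⟨hbB, hbc⟩ := Finset.mem_filter.mp hb
        exact hγ (Finset.mem_image.mpr ⟨b, hbB, hbc⟩)
      have h3 : (B \ Q).card = ∑ γ ∈ (B \ Q).image c, (colorClass c (B \ Q) γ).card :=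
        Finset.card_eq_sum_card_fiberwise (fun b hb => Finset.mem_image_of_mem c hb)
      omega
    -- the sum hypothesis of the greedy lemma
    have hsum : k + ∑ γ ∈ (Q \ B).image c,
        ((colorClass c (Q \ B) γ).card - (k - (colorClass c B γ).card))
        ≤ (Q \ B).card := by
      have h1 : ∑ γ ∈ (Q \ B).image c,
          ((colorClass c (Q \ B) γ).card - (k - (colorClass c B γ).card))
          ≤ ∑ γ ∈ (Q \ B).image c, (colorClass c (B \ Q) γ).card :=
        Finset.sum_le_sum (fun γ _ => hpoint γ)
      have h2 := hsumBQ ((Q \ B).image c)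
      have h3 : (Q \ B).card + (Q ∩ B).card = Q.card :=
        Finset.card_sdiff_add_card_inter Q B
      have h4 : (B \ Q).card + (B ∩ Q).card = B.card :=
        Finset.card_sdiff_add_card_inter B Q
      have h5 : (Q ∩ B).card = (B ∩ Q).card := by rw [Finset.inter_comm]
      omega
    obtain ⟨S, hSP, hScard, hSk⟩ := extend_aux c k k B (Q \ B)
      Finset.disjoint_sdiff hBclass hsum
    have hdisBS : Disjoint B S := Finset.disjoint_sdiff.mono_right hSP
    obtain ⟨γ, hγ⟩ := h (B ∪ S) Finset.subset_union_left
      (Finset.union_subset_union (le_refl _) (hSP.trans (Finset.sdiff_subset)))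
      (by rw [Finset.card_union_of_disjoint hdisBS, hBcard, hScard]; omega)
    have := hSk γ
    omega
end

section
/- Let k ≥ 1, let Q be a set of 2k+1 balls in which every color class has size at most k, and let D be a set of 2k balls disjoint from Q consisting of exactly k balls of color α and exactly k balls of color β. Then α = β if and only if for every z ∈ Q the set D ∪ {z} contains a color class of size at least k+1. -/
/-- let every color class of the `(2k+1)`-set `Q` have size at most `k`,
and let `D` be disjoint from `Q` and consist of exactly `k` balls of color `α` and
exactly `k` balls of color `β`.  Then `α = β` iff for every `z ∈ Q` the set `D ∪ {z}`
contains a color class of size at least `k+1`. -/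
theorem color_compare_iff_always_majority {Ball Color : Type*}
    [DecidableEq Ball] [DecidableEq Color]
    (c : Ball → Color) (k : ℕ) (hk : 1 ≤ k)
    (Q : Finset Ball) (hQcard : Q.card = 2 * k + 1)
    (hQ : ∀ γ : Color, (colorClass c Q γ).card ≤ k)
    (α β : Color) (D Dα Dβ : Finset Ball)
    (hD : D = Dα ∪ Dβ) (hdisj : Disjoint Dα Dβ)
    (hDα : Dα.card = k) (hDβ : Dβ.card = k)
    (hcα : ∀ x ∈ Dα, c x = α) (hcβ : ∀ x ∈ Dβ, c x = β)
    (hDQ : Disjoint D Q) :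
    α = β ↔ ∀ z ∈ Q, ∃ γ : Color, k + 1 ≤ (colorClass c (insert z D) γ).card := by
  constructor
  · rintro rfl z hz
    refine ⟨α, ?_⟩
    have hDsub : D ⊆ colorClass c (insert z D) α := by
      intro x hx
      simp only [colorClass, Finset.mem_filter, Finset.mem_insert]
      refine ⟨Or.inr hx, ?_⟩
      rw [hD] at hx
      rcases Finset.mem_union.1 hx with h | h
      · exact hcα x h
      · exact hcβ x h
    have hDcard : D.card = 2 * k := by
      rw [hD, Finset.card_union_of_disjoint hdisj, hDα, hDβ]; ring
    calc k + 1 ≤ 2 * k := by omega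
      _ = D.card := hDcard.symm
      _ ≤ _ := Finset.card_le_card hDsub
  · intro h
    by_contra hne
    have hcard : (colorClass c Q α ∪ colorClass c Q β).card ≤ 2 * k := by
      calc (colorClass c Q α ∪ colorClass c Q β).card
          ≤ (colorClass c Q α).card + (colorClass c Q β).card := Finset.card_union_le _ _
        _ ≤ k + k := add_le_add (hQ α) (hQ β)
        _ = 2 * k := by ring
    have hex : ∃ z ∈ Q, z ∉ colorClass c Q α ∪ colorClass c Q β := by
      by_contra hc
      push_neg at hc
      have hsub : Q ⊆ colorClass c Q α ∪ colorClass c Q β := hc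
      have := Finset.card_le_card hsub
      omega
    obtain ⟨z, hz, hznot⟩ := hex
    simp only [Finset.mem_union, colorClass, Finset.mem_filter, not_or, not_and] at hznot
    have hzα : c z ≠ α := hznot.1 hz
    have hzβ : c z ≠ β := hznot.2 hz
    obtain ⟨γ, hγ⟩ := h z hz
    have hDmem : ∀ x ∈ D, c x = α ∨ c x = β := by
      intro x hx
      rw [hD] at hx
      rcases Finset.mem_union.1 hx with hh | hh
      · exact Or.inl (hcα x hh)
      · exact Or.inr (hcβ x hh)
    have hbound : (colorClass c (insert z D) γ).card ≤ k := by
      by_cases hγz : γ = c z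
      · have hsub : colorClass c (insert z D) γ ⊆ {z} := by
          intro x hx
          simp only [colorClass, Finset.mem_filter, Finset.mem_insert] at hx
          rcases hx.1 with rfl | hxD
          · simp
          · rcases hDmem x hxD with hh | hh
            · exact absurd ((hx.2.trans hγz).symm.trans hh) hzα
            · exact absurd ((hx.2.trans hγz).symm.trans hh) hzβ
        have := Finset.card_le_card hsub
        simp only [Finset.card_singleton] at this
        omega
      · have hsub : colorClass c (insert z D) γ ⊆ colorClass c D γ := by
          intro x hx
          simp only [colorClass, Finset.mem_filter, Finset.mem_insert] at hx ⊢
          rcases hx.1 with rfl | hxD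
          · exact absurd hx.2.symm hγz
          · exact ⟨hxD, hx.2⟩
        have h2 : colorClass c D γ ⊆ Dα ∨ colorClass c D γ ⊆ Dβ := by
          by_cases hγα : γ = α
          · left; intro x hx
            simp only [colorClass, Finset.mem_filter] at hx
            have hxD := hx.1
            rw [hD, Finset.mem_union] at hxD
            rcases hxD with hh | hh
            · exact hh
            · exact absurd (((hcβ x hh).symm.trans hx.2).trans hγα) (fun e => hne e.symm)
          · right; intro x hx
            simp only [colorClass, Finset.mem_filter] at hx
            have hxD := hx.1
            rw [hD, Finset.mem_union] at hxD
            rcases hxD with hh | hh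
            · exact absurd ((hcα x hh).symm.trans hx.2) (fun e => hγα e.symm)
            · exact hh
        rcases h2 with hs | hs
        · have := Finset.card_le_card (hsub.trans hs); omega
        · have := Finset.card_le_card (hsub.trans hs); omega
    omega
end

section
/- Let Q be a finite set of colored balls having a plurality ball of color β, let u ∉ Q be a ball with c(u) = β, and let v ∈ Q. Then the set (Q \ {v}) ∪ {u} has a plurality ball, and every plurality ball of (Q \ {v}) ∪ {u} has color β. -/
/-- if `Q` has a plurality ball of color `β`, `u ∉ Q` has color `β`, and
`v ∈ Q`, then `(Q \ {v}) ∪ {u}` has a plurality ball, and every plurality ball of it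
has color `β`. -/
theorem plurality_stable_under_swap {Ball Color : Type*}
    [DecidableEq Ball] [DecidableEq Color]
    (c : Ball → Color) (Q : Finset Ball) (β : Color)
    (hplur : ∃ p, IsPlurality c Q p ∧ c p = β)
    (u : Ball) (hu : u ∉ Q) (hcu : c u = β)
    (v : Ball) (hv : v ∈ Q) :
    (∃ p, IsPlurality c (insert u (Q \ {v})) p) ∧
      ∀ p, IsPlurality c (insert u (Q \ {v})) p → c p = β := by
  obtain ⟨p, ⟨hpQ, hp⟩, hpc⟩ := hplur
  have hu' : u ∉ Q \ {v} := fun h => hu (Finset.mem_sdiff.mp h).1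
  -- color class of β in insert u (Q\{v}) is insert u of that in Q\{v}
  have hβ : colorClass c (insert u (Q \ {v})) β = insert u (colorClass c (Q \ {v}) β) := by
    simp [colorClass, Finset.filter_insert, hcu]
  have hγ : ∀ γ : Color, γ ≠ β →
      colorClass c (insert u (Q \ {v})) γ = colorClass c (Q \ {v}) γ := by
    intro γ hγβ
    simp [colorClass, Finset.filter_insert, hcu, hγβ.symm]
  have hle : ∀ γ : Color, (colorClass c (Q \ {v}) γ).card ≤ (colorClass c Q γ).card := by
    intro γ
    exact Finset.card_le_card (Finset.filter_subset_filter _ (Finset.sdiff_subset))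
  have hge : (colorClass c Q β).card ≤ (colorClass c (Q \ {v}) β).card + 1 := by
    have hsub : colorClass c Q β ⊆ insert v (colorClass c (Q \ {v}) β) := by
      intro x hx
      rw [colorClass, Finset.mem_filter] at hx
      by_cases hxv : x = v
      · subst hxv; exact Finset.mem_insert_self _ _
      · exact Finset.mem_insert_of_mem (by
          rw [colorClass, Finset.mem_filter]
          exact ⟨Finset.mem_sdiff.mpr ⟨hx.1, by simp [hxv]⟩, hx.2⟩)
    calc (colorClass c Q β).card ≤ (insert v (colorClass c (Q \ {v}) β)).card :=
          Finset.card_le_card hsub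
      _ ≤ (colorClass c (Q \ {v}) β).card + 1 := Finset.card_insert_le _ _
  have hkey : ∀ γ : Color, γ ≠ β →
      (colorClass c (insert u (Q \ {v})) γ).card <
        (colorClass c (insert u (Q \ {v})) β).card := by
    intro γ hγβ
    have hum : u ∉ colorClass c (Q \ {v}) β := fun h => hu' (Finset.mem_filter.mp h).1
    rw [hγ γ hγβ, hβ, Finset.card_insert_of_notMem hum]
    calc (colorClass c (Q \ {v}) γ).card ≤ (colorClass c Q γ).card := hle γ
      _ < (colorClass c Q β).card := hpc ▸ hp γ (hpc ▸ hγβ)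
      _ ≤ (colorClass c (Q \ {v}) β).card + 1 := hge
  have hup : IsPlurality c (insert u (Q \ {v})) u :=
    ⟨Finset.mem_insert_self _ _, fun γ hγβ => by rw [hcu]; exact hkey γ (hcu ▸ hγβ)⟩
  refine ⟨⟨u, hup⟩, fun q hq => ?_⟩
  by_contra hqc
  exact absurd (hq.2 β (Ne.symm hqc)) (not_lt_of_gt (hkey (c q) hqc))
end

section
/- Let S be a finite set of colored balls in which two distinct colors β and γ both attain the maximum color class size of S, and let v ∈ S be a ball whose color is neither β nor γ. Let y and u be distinct balls outside S with c(y) = β and c(u) = γ. Then the set (S \ {v}) ∪ {y, u} has no plurality ball. -/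
/-- if two distinct colors `β, γ` both attain the maximum color class
size of `S`, `v ∈ S` has a color different from both, and `y, u ∉ S` are distinct balls
with `c y = β` and `c u = γ`, then `(S \ {v}) ∪ {y, u}` has no plurality ball. -/
theorem no_plurality_after_double_swap {Ball Color : Type*}
    [DecidableEq Ball] [DecidableEq Color]
    (c : Ball → Color) (S : Finset Ball) (β γ : Color) (hβγ : β ≠ γ)
    (htie : (colorClass c S β).card = (colorClass c S γ).card)
    (hmax : ∀ δ : Color, (colorClass c S δ).card ≤ (colorClass c S β).card)
    (v : Ball) (hv : v ∈ S) (hvβ : c v ≠ β) (hvγ : c v ≠ γ)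
    (y u : Ball) (hyu : y ≠ u) (hy : y ∉ S) (hu : u ∉ S)
    (hcy : c y = β) (hcu : c u = γ) :
    ¬ ∃ p, IsPlurality c (insert y (insert u (S \ {v}))) p := by
  rintro ⟨p, hpT, hp⟩
  set T := insert y (insert u (S \ {v})) with hT
  have hsd : S \ {v} = S.erase v := Finset.sdiff_singleton_eq_erase v S
  have hclass : ∀ δ : Color, c v ≠ δ →
      colorClass c (S \ {v}) δ = colorClass c S δ := by
    intro δ hδ
    rw [hsd]
    unfold colorClass
    rw [Finset.filter_erase, Finset.erase_eq_of_notMem]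
    simp [hδ]
  have hsub : ∀ δ : Color, colorClass c (S \ {v}) δ ⊆ colorClass c S δ := by
    intro δ
    exact Finset.filter_subset_filter _ (Finset.sdiff_subset)
  have hβ1 : (colorClass c T β).card = (colorClass c S β).card + 1 := by
    rw [hT]
    unfold colorClass
    rw [Finset.filter_insert, Finset.filter_insert]
    rw [if_pos hcy, if_neg (by rw [hcu]; exact fun h => hβγ h.symm)]
    rw [Finset.card_insert_of_notMem (by simp [hy])]
    rw [show (S \ {v}).filter (fun b => c b = β) = colorClass c (S \ {v}) β from rfl,
      hclass β hvβ]
    rfl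
  have hγ1 : (colorClass c T γ).card = (colorClass c S γ).card + 1 := by
    rw [hT]
    unfold colorClass
    rw [Finset.filter_insert, Finset.filter_insert]
    rw [if_neg (by rw [hcy]; exact hβγ), if_pos hcu]
    rw [Finset.card_insert_of_notMem (by simp [hu])]
    rw [show (S \ {v}).filter (fun b => c b = γ) = colorClass c (S \ {v}) γ from rfl,
      hclass γ hvγ]
    rfl
  have hother : ∀ δ : Color, δ ≠ β → δ ≠ γ →
      (colorClass c T δ).card ≤ (colorClass c S δ).card := by
    intro δ h1 h2
    rw [hT]
    unfold colorClass
    rw [Finset.filter_insert, Finset.filter_insert]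
    rw [if_neg (by rw [hcy]; exact fun h => h1 h.symm),
      if_neg (by rw [hcu]; exact fun h => h2 h.symm)]
    exact Finset.card_le_card (hsub δ)
  by_cases h1 : c p = β
  · have := hp γ (by rw [h1]; exact fun h => hβγ h.symm)
    rw [h1, hβ1, hγ1, htie] at this
    exact lt_irrefl _ this
  by_cases h2 : c p = γ
  · have := hp β (by rw [h2]; exact hβγ)
    rw [h2, hβ1, hγ1, htie] at this
    exact lt_irrefl _ this
  · have := hp β (fun h => h1 h.symm)
    rw [hβ1] at this
    have hle := (hother (c p) h1 h2).trans (hmax (c p))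
    omega
end

section
/- Let Q be a finite set of colored balls in which the maximum color class size is attained by at least two distinct colors, one of which is β. Let x ∉ Q be a ball with c(x) = β and let z ∈ Q. Then the set (Q \ {z}) ∪ {x} has a plurality ball if and only if c(z) ≠ β; moreover, when c(z) ≠ β, every plurality ball of (Q \ {z}) ∪ {x} has color β. -/
/-- suppose the maximum color class size of `Q` is attained by at least
two distinct colors, one of which is `β`; let `x ∉ Q` with `c x = β` and `z ∈ Q`.
Then `(Q \ {z}) ∪ {x}` has a plurality ball iff `c z ≠ β`; moreover when `c z ≠ β`,
every plurality ball of `(Q \ {z}) ∪ {x}` has color `β`. -/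
theorem plurality_after_swap_iff {Ball Color : Type*}
    [DecidableEq Ball] [DecidableEq Color]
    (c : Ball → Color) (Q : Finset Ball) (β γ : Color) (hβγ : γ ≠ β)
    (htie : (colorClass c Q β).card = (colorClass c Q γ).card)
    (hmax : ∀ δ : Color, (colorClass c Q δ).card ≤ (colorClass c Q β).card)
    (x : Ball) (hx : x ∉ Q) (hcx : c x = β)
    (z : Ball) (hz : z ∈ Q) :
    ((∃ p, IsPlurality c (insert x (Q \ {z})) p) ↔ c z ≠ β) ∧
      (c z ≠ β → ∀ p, IsPlurality c (insert x (Q \ {z})) p → c p = β) := by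
  have hsd : Q \ {z} = Q.erase z := by rw [Finset.erase_eq]
  have hclass : ∀ δ, colorClass c (insert x (Q \ {z})) δ =
      if c x = δ then insert x ((colorClass c Q δ).erase z)
      else (colorClass c Q δ).erase z := by
    intro δ
    rw [hsd]
    simp only [colorClass, Finset.filter_insert, Finset.filter_erase]
  -- card for δ ≠ β
  have hne : ∀ δ, δ ≠ β → (colorClass c (insert x (Q \ {z})) δ).card ≤
      (colorClass c Q δ).card := by
    intro δ hδ
    rw [hclass, if_neg (by rw [hcx]; exact fun h => hδ h.symm)]
    exact Finset.card_erase_le.trans le_rfl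
  have hxnot : ∀ δ, x ∉ (colorClass c Q δ).erase z := by
    intro δ h
    exact hx (Finset.mem_filter.mp (Finset.mem_of_mem_erase h)).1
  -- card for β
  have hβcard1 : c z ≠ β → (colorClass c (insert x (Q \ {z})) β).card =
      (colorClass c Q β).card + 1 := by
    intro hcz
    rw [hclass, if_pos hcx]
    have hznot : z ∉ colorClass c Q β := by
      simp [colorClass, hcz]
    rw [Finset.erase_eq_of_notMem hznot, Finset.card_insert_of_notMem]
    intro h
    exact hx (Finset.mem_filter.mp h).1
  have hβcard2 : c z = β → (colorClass c (insert x (Q \ {z})) β).card =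
      (colorClass c Q β).card := by
    intro hcz
    rw [hclass, if_pos hcx]
    have hzin : z ∈ colorClass c Q β := Finset.mem_filter.mpr ⟨hz, hcz⟩
    rw [Finset.card_insert_of_notMem (hxnot β), Finset.card_erase_of_mem hzin]
    have : 1 ≤ (colorClass c Q β).card := Finset.card_pos.mpr ⟨z, hzin⟩
    omega
  have hγcard : c z = β → (colorClass c (insert x (Q \ {z})) γ).card =
      (colorClass c Q γ).card := by
    intro hcz
    rw [hclass, if_neg (by rw [hcx]; exact fun h => hβγ h.symm)]
    have hznot : z ∉ colorClass c Q γ := by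
      simp [colorClass, hcz, hβγ.symm]
    rw [Finset.erase_eq_of_notMem hznot]
  -- the "moreover" part
  have hcol : c z ≠ β → ∀ p, IsPlurality c (insert x (Q \ {z})) p → c p = β := by
    intro hcz p ⟨hp, hlt⟩
    by_contra hpb
    have h1 := hlt β (fun h => hpb h.symm)
    have h2 := hβcard1 hcz
    have h3 := hne (c p) hpb
    have h4 := hmax (c p)
    omega
  constructor
  · constructor
    · rintro ⟨p, hpl⟩ hcz
      -- c z = β: tie between β and γ remains, no plurality possible
      obtain ⟨hp, hlt⟩ := hpl
      by_cases hpb : c p = β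
      · have := hlt γ (hpb ▸ hβγ)
        rw [hpb, hβcard2 hcz, hγcard hcz] at this
        omega
      · have := hlt β (fun h => hpb h.symm)
        have h2 := hβcard2 hcz
        have h3 := hne (c p) hpb
        have h4 := hmax (c p)
        omega
    · intro hcz
      refine ⟨x, Finset.mem_insert_self _ _, ?_⟩
      intro δ hδ
      rw [hcx] at hδ ⊢
      have := hne δ hδ
      have := hβcard1 hcz
      have := hmax δ
      omega
  · exact hcol
end

section
/- Let l ≥ 1, let B be a set of l balls all of color β, and let T be a set of l balls disjoint from B none of which has color β. Then the set B ∪ T has a plurality ball if and only if T is not monochromatic. -/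
/-- let `B` be `l ≥ 1` balls of color `β` and `T` be `l` balls disjoint
from `B`, none of which has color `β`.  Then `B ∪ T` has a plurality ball iff `T` is not
monochromatic. -/
theorem plurality_iff_not_monochromatic {Ball Color : Type*}
    [DecidableEq Ball] [DecidableEq Color]
    (c : Ball → Color) (l : ℕ) (hl : 1 ≤ l) (β : Color)
    (B T : Finset Ball) (hdisj : Disjoint B T)
    (hBcard : B.card = l) (hB : ∀ x ∈ B, c x = β)
    (hTcard : T.card = l) (hT : ∀ x ∈ T, c x ≠ β) :
    (∃ p, IsPlurality c (B ∪ T) p) ↔ ¬ (∀ x ∈ T, ∀ y ∈ T, c x = c y) := by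
  have hclassβ : colorClass c (B ∪ T) β = B := by
    ext x
    simp only [colorClass, Finset.mem_filter, Finset.mem_union]
    constructor
    · rintro ⟨hx | hx, hc⟩
      · exact hx
      · exact absurd hc (hT x hx)
    · intro hx; exact ⟨Or.inl hx, hB x hx⟩
  have hclassγ : ∀ γ, γ ≠ β → colorClass c (B ∪ T) γ = colorClass c T γ := by
    intro γ hγ
    ext x
    simp only [colorClass, Finset.mem_filter, Finset.mem_union]
    constructor
    · rintro ⟨hx | hx, hc⟩
      · exact absurd ((hB x hx).symm.trans hc) (Ne.symm hγ)
      · exact ⟨hx, hc⟩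
    · rintro ⟨hx, hc⟩; exact ⟨Or.inr hx, hc⟩
  have hTle : ∀ γ, (colorClass c T γ).card ≤ l :=
    fun γ => hTcard ▸ Finset.card_le_card (Finset.filter_subset _ _)
  constructor
  · rintro ⟨p, hp, hlt⟩ hmono
    by_cases hcp : c p = β
    · obtain ⟨t, ht⟩ := Finset.card_pos.mp (by omega : 0 < T.card)
      have hγβ : c t ≠ β := hT t ht
      have h1 := hlt (c t) (by rw [hcp]; exact hγβ)
      rw [hcp, hclassβ, hclassγ _ hγβ] at h1
      have h2 : colorClass c T (c t) = T := by
        ext x; simp only [colorClass, Finset.mem_filter]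
        exact ⟨fun h => h.1, fun hx => ⟨hx, hmono x hx t ht⟩⟩
      rw [h2, hTcard, hBcard] at h1
      omega
    · have h1 := hlt β (fun h => hcp h.symm)
      rw [hclassβ, hclassγ _ hcp] at h1
      have := hTle (c p)
      omega
  · intro hmono
    obtain ⟨b, hb⟩ := Finset.card_pos.mp (by omega : 0 < B.card)
    refine ⟨b, Finset.mem_union_left _ hb, ?_⟩
    intro γ hγ
    rw [hB b hb] at *
    rw [hclassβ, hclassγ _ hγ, hBcard]
    have hne : colorClass c T γ ≠ T := by
      intro heq
      apply hmono
      intro x hx y hy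
      have hx' : x ∈ colorClass c T γ := heq.symm ▸ hx
      have hy' : y ∈ colorClass c T γ := heq.symm ▸ hy
      simp only [colorClass, Finset.mem_filter] at hx' hy'
      rw [hx'.2, hy'.2]
    have hss : colorClass c T γ ⊂ T := HasSubset.Subset.ssubset_of_ne (Finset.filter_subset _ _) hne
    have hlt := Finset.card_lt_card hss
    omega
end

section
/- Let l ≥ 1, let B be a set of l balls all of color β, and let T be a set of l+1 balls disjoint from B none of which has color β. Then the set B ∪ T has no plurality ball if and only if some color occurs exactly l times among the balls of T. -/
/-- let `B` be `l ≥ 1` balls of color `β` and `T` be `l+1` balls disjoint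
from `B`, none of color `β`.  Then `B ∪ T` has no plurality ball iff some color occurs
exactly `l` times among the balls of `T`. -/
theorem no_plurality_iff_exact_class {Ball Color : Type*}
    [DecidableEq Ball] [DecidableEq Color]
    (c : Ball → Color) (l : ℕ) (hl : 1 ≤ l) (β : Color)
    (B T : Finset Ball) (hdisj : Disjoint B T)
    (hBcard : B.card = l) (hB : ∀ x ∈ B, c x = β)
    (hTcard : T.card = l + 1) (hT : ∀ x ∈ T, c x ≠ β) :
    (¬ ∃ p, IsPlurality c (B ∪ T) p) ↔ ∃ δ : Color, (colorClass c T δ).card = l := by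
  classical
  have hclassβ : colorClass c (B ∪ T) β = B := by
    unfold colorClass
    rw [Finset.filter_union]
    have h1 : B.filter (fun b => c b = β) = B := Finset.filter_eq_self.mpr hB
    have h2 : T.filter (fun b => c b = β) = ∅ := Finset.filter_eq_empty_iff.mpr hT
    rw [h1, h2, Finset.union_empty]
  have hclassγ : ∀ γ, γ ≠ β → colorClass c (B ∪ T) γ = colorClass c T γ := by
    intro γ hγ
    unfold colorClass
    rw [Finset.filter_union]
    have h1 : B.filter (fun b => c b = γ) = ∅ := by
      apply Finset.filter_eq_empty_iff.mpr
      intro x hx h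
      exact hγ (((hB x hx).symm.trans h).symm)
    rw [h1, Finset.empty_union]
  have hsub : ∀ δ, colorClass c T δ ⊆ T := fun δ => Finset.filter_subset _ _
  have hcount_le : ∀ δ, (colorClass c T δ).card ≤ l + 1 := fun δ =>
    hTcard ▸ Finset.card_le_card (hsub δ)
  have hdisj2 : ∀ γ δ : Color, γ ≠ δ →
      (colorClass c T γ).card + (colorClass c T δ).card ≤ l + 1 := by
    intro γ δ h
    have hd : Disjoint (colorClass c T γ) (colorClass c T δ) := by
      rw [Finset.disjoint_left]
      intro x hx hx'
      simp only [colorClass, Finset.mem_filter] at hx hx'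
      exact h (hx.2 ▸ hx'.2 ▸ rfl)
    calc (colorClass c T γ).card + (colorClass c T δ).card
        = (colorClass c T γ ∪ colorClass c T δ).card :=
          (Finset.card_union_of_disjoint hd).symm
      _ ≤ T.card := Finset.card_le_card (Finset.union_subset (hsub γ) (hsub δ))
      _ = l + 1 := hTcard
  constructor
  · -- no plurality → exists δ with count l
    intro hno
    by_contra hne
    push_neg at hne
    apply hno
    by_cases hbig : ∃ δ, l + 1 ≤ (colorClass c T δ).card
    · obtain ⟨δ, hδ⟩ := hbig
      have heq : colorClass c T δ = T :=
        Finset.eq_of_subset_of_card_le (hsub δ) (hTcard ▸ hδ)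
      have hTne : T.Nonempty := Finset.card_pos.mp (by omega)
      obtain ⟨t, ht⟩ := hTne
      have hct : c t = δ := by
        have ht' : t ∈ colorClass c T δ := heq.symm ▸ ht
        exact (Finset.mem_filter.mp ht').2
      refine ⟨t, Finset.mem_union_right _ ht, ?_⟩
      intro γ hγ
      rw [hct]
      have hδβ : δ ≠ β := by
        intro h; exact hT t ht (hct.trans h)
      rw [hclassγ δ hδβ, heq, hTcard]
      by_cases hγβ : γ = β
      · rw [hγβ, hclassβ, hBcard]; omega
      · rw [hclassγ γ hγβ]
        have := hdisj2 γ δ (by rw [hct] at hγ; exact hγ)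
        rw [heq, hTcard] at this
        omega
    · push_neg at hbig
      have hsmall : ∀ δ, (colorClass c T δ).card < l := by
        intro δ
        have h1 := hbig δ
        have h2 := hne δ
        omega
      have hBne : B.Nonempty := Finset.card_pos.mp (by omega)
      obtain ⟨b, hb⟩ := hBne
      refine ⟨b, Finset.mem_union_left _ hb, ?_⟩
      intro γ hγ
      rw [hB b hb] at hγ ⊢
      rw [hclassβ, hBcard, hclassγ γ hγ]
      exact hsmall γ
  · -- exists δ with count l → no plurality
    rintro ⟨δ, hδ⟩ ⟨p, hp, hplur⟩
    have hδβ : δ ≠ β := by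
      intro h
      have : colorClass c T δ = ∅ := by
        apply Finset.filter_eq_empty_iff.mpr
        intro x hx hc
        exact hT x hx (hc.trans h)
      rw [this] at hδ
      simp at hδ
      omega
    by_cases hpβ : c p = β
    · have := hplur δ (by rw [hpβ]; exact hδβ)
      rw [hpβ, hclassβ, hBcard, hclassγ δ hδβ, hδ] at this
      omega
    · have := hplur β (fun h => hpβ h.symm)
      rw [hclassβ, hBcard, hclassγ (c p) hpβ] at this
      by_cases hpδ : c p = δ
      · rw [hpδ, hδ] at this; omega
      · have h2 := hdisj2 (c p) δ hpδ
        rw [hδ] at h2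
        omega
end
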